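/- Let A be a simple Poisson algebra with identity 1 over a field F of characteristic zero, and let U be an abelian ideal of the Lie algebra {A,A}, i.e., an ideal with {U,U} = (0). Then {U,A} = (0). -/
import Mathlib


/-- A Poisson bracket on a commutative `F`-algebra `A`: an `F`-bilinear map
`{,} : A × A → A` making `(A, {,})` a Lie algebra and satisfying the Leibniz
rule `{ab, c} = a{b,c} + {a,c}b`. -/
structure PoissonBracket (F : Type*) (A : Type*) [Field F] [CommRing A] [Algebra F A] where
  br : A →ₗ[F] A →ₗ[F] A
  br_self : ∀ a : A, br a a = 0
  jacobi : ∀ a b c : A, br a (br b c) + br b (br c a) + br c (br a b) = 0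
  leibniz : ∀ a b c : A, br (a * b) c = a * br b c + br a c * b

namespace PoissonBracket

variable {F A : Type*} [Field F] [CommRing A] [Algebra F A]

/-- `{A, A}` : the `F`-linear span of all brackets `{a, b}`, `a, b ∈ A`. -/
def lieSpan (P : PoissonBracket F A) : Submodule F A :=
  Submodule.span F {x : A | ∃ a b : A, P.br a b = x}

/-- `{M, N}` : the `F`-linear span of all brackets `{u, v}`, `u ∈ M`, `v ∈ N`. -/
def brSpan (P : PoissonBracket F A) (M N : Submodule F A) : Submodule F A :=
  Submodule.span F {x : A | ∃ u ∈ M, ∃ v ∈ N, P.br u v = x}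

/-- `U` is an ideal of the Lie algebra `{A, A}`. -/
def IsLieIdealOfBrackets (P : PoissonBracket F A) (U : Submodule F A) : Prop :=
  U ≤ P.lieSpan ∧ ∀ x ∈ P.lieSpan, ∀ u ∈ U, P.br x u ∈ U

/-- The derived series `U^[0] = U`, `U^[i+1] = {U^[i], U^[i]}`. -/
def derived (P : PoissonBracket F A) (U : Submodule F A) : ℕ → Submodule F A
  | 0 => U
  | (i + 1) => P.brSpan (P.derived U i) (P.derived U i)

/-- `A` is a simple Poisson algebra: it has no Poisson ideals other than `(0)` and `A`. -/
def IsSimple (P : PoissonBracket F A) : Prop :=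
  ∀ I : Ideal A, (∀ a ∈ I, ∀ b : A, P.br a b ∈ I) → I = ⊥ ∨ I = ⊤

/-- The Poisson center `Z = {a ∈ A | {a, A} = (0)}`. -/
def pCenter (P : PoissonBracket F A) : Submodule F A where
  carrier := {a : A | ∀ b : A, P.br a b = 0}
  add_mem' := by
    intro x y hx hy b
    simp [map_add, hx b, hy b]
  zero_mem' := by
    intro b
    simp
  smul_mem' := by
    intro c x hx b
    simp [map_smul, hx b]

end PoissonBracket

variable {F A : Type*} [Field F] [CommRing A] [Algebra F A]

open PoissonBracket

section AuxLemmas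

/-- Cancel a nonzero natural number coefficient in an algebra over a
characteristic-zero field. -/
lemma natCast_mul_cancel [CharZero F] (n : ℕ) (hn : n ≠ 0) (x : A)
    (h : (n : A) * x = 0) : x = 0 := by
  have h1 : (n : F) • x = 0 := by
    rw [Algebra.smul_def, map_natCast]; exact h
  have h2 : (n : F) ≠ 0 := Nat.cast_ne_zero.2 hn
  calc x = (n : F)⁻¹ • ((n : F) • x) := (inv_smul_smul₀ h2 x).symm
    _ = 0 := by rw [h1, smul_zero]

/-- Power rule for a Leibniz map. -/
lemma der_pow (d : A → A) (hmul : ∀ x y, d (x * y) = x * d y + d x * y)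
    (a : A) : ∀ k : ℕ, d (a ^ (k + 1)) = ((k : A) + 1) * a ^ k * d a := by
  intro k
  induction k with
  | zero => simp
  | succ m ih =>
    have : a ^ (m + 2) = a * a ^ (m + 1) := by ring
    rw [this, hmul, ih]
    push_cast
    ring

lemma der_zero (d : A → A) (hmul : ∀ x y, d (x * y) = x * d y + d x * y) :
    d 0 = 0 := by
  have := hmul 0 0
  simp at this
  exact this

/-- In characteristic zero, a Leibniz map sends nilpotent elements to
nilpotent elements. -/
lemma der_nilpotent [CharZero F] (d : A → A)
    (hmul : ∀ x y, d (x * y) = x * d y + d x * y) (a : A)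
    (h : IsNilpotent a) : IsNilpotent (d a) := by
  obtain ⟨n, hn⟩ := h
  cases n with
  | zero =>
    simp only [pow_zero] at hn
    exact ⟨1, by rw [pow_one, ← mul_one (d a), hn, mul_zero]⟩
  | succ m =>
    have key : ∀ j i : ℕ, i + j = m → a ^ i * d a ^ (2 * j + 1) = 0 := by
      intro j
      induction j with
      | zero =>
        intro i hi
        have hi' : i = m := by omega
        subst hi'
        have h0 : d (a ^ (i + 1)) = 0 := by rw [hn]; exact der_zero d hmul
        rw [der_pow d hmul a i] at h0
        have h1 : ((i : ℕ) : A) * (a ^ i * d a) + (a ^ i * d a) = 0 := by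
          linear_combination h0
        have h2 := natCast_mul_cancel (F := F) (i + 1) (by omega) (a ^ i * d a)
          (by push_cast; linear_combination h1)
        simpa using h2
      | succ j ih =>
        intro i hi
        have H : a ^ (i + 1) * d a ^ (2 * j + 1) = 0 := ih (i + 1) (by omega)
        have E : d (a ^ (i + 1) * d a ^ (2 * j + 1)) = 0 := by
          rw [H]; exact der_zero d hmul
        rw [hmul, der_pow d hmul a i, der_pow d hmul (d a) (2 * j)] at E
        push_cast at E
        have p1 : a ^ (i + 1) = a ^ i * a := pow_succ a i
        have p2 : d a ^ (2 * j + 1) = d a ^ (2 * j) * d a := pow_succ (d a) (2 * j)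
        have p3 : d a ^ (2 * (j + 1) + 1) = d a ^ (2 * j) * d a * d a * d a := by
          rw [show 2 * (j + 1) + 1 = (2 * j + 1) + 2 from by ring, pow_add, p2]; ring
        rw [p1, p2] at E H
        have goal6 : ((i : A) + 1) * (a ^ i * d a ^ (2 * (j + 1) + 1)) = 0 := by
          rw [p3]
          linear_combination d a * E - (2 * (j : A) + 1) * d (d a) * H
        exact natCast_mul_cancel (F := F) (i + 1) (by omega)
          (a ^ i * d a ^ (2 * (j + 1) + 1)) (by push_cast; linear_combination goal6)
    have := key m 0 (by omega)
    exact ⟨2 * m + 1, by simpa using this⟩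

/-- Antisymmetry of the bracket. -/
lemma br_antisymm (P : PoissonBracket F A) (a b : A) : P.br a b = - P.br b a := by
  have h := P.br_self (a + b)
  simp only [map_add, LinearMap.add_apply] at h
  rw [P.br_self a, P.br_self b] at h
  linear_combination h

end AuxLemmas

/-- **Lemma 6.** In a simple Poisson algebra with `1` over a field of characteristic
zero, every abelian ideal `U` of the Lie algebra `{A, A}` satisfies `{U, A} = 0`. -/
theorem abelian_ideal_brackets_eq_zero [CharZero F] [Nontrivial A]
    (P : PoissonBracket F A) (hP : P.IsSimple) (U : Submodule F A)
    (hU : P.IsLieIdealOfBrackets U) (habelian : ∀ u ∈ U, ∀ v ∈ U, P.br u v = 0) :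
    ∀ u ∈ U, ∀ a : A, P.br u a = 0 := by
  classical
  -- Step 1: the nilradical is a Poisson ideal, hence `A` is reduced.
  have hnilPoisson : ∀ x ∈ nilradical A, ∀ b : A, P.br x b ∈ nilradical A := by
    intro x hx b
    rw [mem_nilradical] at hx ⊢
    exact der_nilpotent (F := F) (fun y => P.br y b) (fun y z => P.leibniz y z b) x hx
  have hred : nilradical A = ⊥ := by
    rcases hP (nilradical A) hnilPoisson with h | h
    · exact h
    · exfalso
      have h1 : (1 : A) ∈ nilradical A := h ▸ Submodule.mem_top
      rw [mem_nilradical] at h1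
      obtain ⟨k, hk⟩ := h1
      rw [one_pow] at hk
      exact one_ne_zero hk
  intro u hu a
  -- `{u, ·}` is a derivation of `A`.
  have hmul2 : ∀ x y : A, P.br u (x * y) = x * P.br u y + P.br u x * y := by
    intro x y
    have h1 := P.leibniz x y u
    have h2 := br_antisymm P u (x * y)
    rw [h1] at h2
    rw [h2, br_antisymm P x u, br_antisymm P y u]
    ring
  -- `{u, {u, x}} ∈ U` for every `x`.
  have hmem2 : ∀ x : A, P.br u (P.br u x) ∈ U := by
    intro x
    have hx : P.br u x ∈ P.lieSpan := Submodule.subset_span ⟨u, x, rfl⟩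
    have h1 := hU.2 _ hx u hu
    rw [show P.br u (P.br u x) = -(P.br (P.br u x) u) from br_antisymm P u (P.br u x)]
    exact neg_mem h1
  -- hence `{u, {u, {u, x}}} = 0` for every `x`.
  have h3 : ∀ x : A, P.br u (P.br u (P.br u x)) = 0 := fun x =>
    habelian u hu _ (hmem2 x)
  -- expansion of `d³(a²)` and `d³(a³)` for the derivation `d = {u, ·}`.
  have hexp2 : P.br u (P.br u (P.br u (a * a))) =
      6 * (P.br u a * P.br u (P.br u a)) + 2 * (a * P.br u (P.br u (P.br u a))) := by
    simp only [hmul2, map_add]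
    ring
  have hexp3 : P.br u (P.br u (P.br u (a * a * a))) =
      6 * (P.br u a * P.br u a * P.br u a) +
        18 * (a * (P.br u a * P.br u (P.br u a))) +
        3 * (a * a * P.br u (P.br u (P.br u a))) := by
    simp only [hmul2, map_add]
    ring
  have e2 : 6 * (P.br u a * P.br u (P.br u a)) +
      2 * (a * P.br u (P.br u (P.br u a))) = 0 := by
    rw [← hexp2]; exact h3 (a * a)
  have key2 : P.br u a * P.br u (P.br u a) = 0 :=
    natCast_mul_cancel (F := F) 6 (by norm_num) _
      (by push_cast; linear_combination e2 - 2 * a * h3 a)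
  have e3 : 6 * (P.br u a * P.br u a * P.br u a) +
      18 * (a * (P.br u a * P.br u (P.br u a))) +
      3 * (a * a * P.br u (P.br u (P.br u a))) = 0 := by
    rw [← hexp3]; exact h3 (a * a * a)
  have key3 : P.br u a * P.br u a * P.br u a = 0 :=
    natCast_mul_cancel (F := F) 6 (by norm_num) _
      (by push_cast; linear_combination e3 - 18 * a * key2 - 3 * (a * a) * h3 a)
  -- `{u, a}` is nilpotent, hence zero since `A` is reduced.
  have hmemnil : P.br u a ∈ nilradical A :=
    mem_nilradical.2 ⟨3, by
      rw [show (P.br u a) ^ 3 = P.br u a * P.br u a * P.br u a from by ring]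
      exact key3⟩
  rw [hred] at hmemnil
  exact (Ideal.mem_bot).1 hmemnil
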